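/- Let F be a field of characteristic 2, let (A,σ) be a totally decomposable central simple F-algebra of degree 2^n with involution of orthogonal type, and let S ⊆ Sym(A,σ) be a subalgebra with x² ∈ F for all x ∈ S, C_A(S) = S and dim_F S = 2^{r_F(S)}. Let 𝔰 be the associated bilinear form on S. If {v₁,…,vₙ} is a set of alternating generators of S with vᵢ² = αᵢ ∈ F^×, then 𝔰 is isometric to the bilinear n-fold Pfister form ⟨⟨α₁,…,αₙ⟩⟩; in particular 𝔰 is nondegenerate. -/

import Mathlib

theorem my_prod_sort {ι M N : Type*} [LinearOrder ι] [CommMonoid M] [Monoid N]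
    (f : M →* N) (g : ι → M) (T : Finset ι) :
    f (∏ i ∈ T, g i) = ((T.sort (· ≤ ·)).map fun i => f (g i)).prod := by
  rw [Finset.prod_eq_multiset_prod, ← Finset.sort_eq (s := T) (r := (· ≤ ·)),
    Multiset.map_coe, Multiset.prod_coe, map_list_prod, List.map_map]
  rfl


/-- The minimum rank of a finite-dimensional `F`-algebra `S`: the least cardinality of a
subset of `S` generating `S` as an `F`-algebra. -/
noncomputable def minRank (F S : Type*) [CommSemiring F] [Semiring S] [Algebra F S] : ℕ :=
  sInf {n : ℕ | ∃ s : Finset S, s.card = n ∧ Algebra.adjoin F (s : Set S) = ⊤}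

theorem stmt_13 (F A : Type*) [Field F] [CharP F 2] [Ring A] [Algebra F A]
    [FiniteDimensional F A] (n : ℕ)
    -- `A` is a central simple `F`-algebra of degree `2 ^ n`
    (hcentral : Subalgebra.center F A = ⊥) (hsimple : IsSimpleRing A)
    (hdeg : Module.finrank F A = 4 ^ n)
    -- `σ` is an involution of the first kind on `A`
    (σ : A →ₗ[F] A) (hmul : ∀ x y : A, σ (x * y) = σ y * σ x)
    (hone : σ 1 = 1) (hinvol : ∀ x : A, σ (σ x) = x)
    -- `σ` is of orthogonal type: `1 ∉ Alt(A,σ)`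
    (horth : (1 : A) ∉ Set.range fun a : A => a - σ a)
    -- `(A,σ)` is totally decomposable
    (htd : ∃ Q : Fin n → Subalgebra F A,
      (∀ i, ∀ x ∈ Q i, σ x ∈ Q i) ∧
      (∀ i, Module.finrank F (Q i) = 4 ∧ Subalgebra.center F (Q i) = ⊥ ∧
        IsSimpleRing (Q i)) ∧
      (∀ i j, i ≠ j → ∀ x ∈ Q i, ∀ y ∈ Q j, x * y = y * x) ∧
      (⨆ i, Q i) = ⊤)
    -- `S ⊆ Sym(A,σ)` is a subalgebra with `x² ∈ F` for all `x ∈ S`,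
    -- `C_A(S) = S`, and `dim_F S = 2 ^ r_F(S)`
    (S : Subalgebra F A) (hSsym : ∀ x ∈ S, σ x = x)
    (hSconic : ∀ x ∈ S, ∃ a : F, x ^ 2 = algebraMap F A a)
    (hScent : Subalgebra.centralizer F (S : Set A) = S)
    (hSdim : Module.finrank F S = 2 ^ minRank F S)
    -- `𝔰` is the associated bilinear form on `S`: `vw + 𝔰(v,w)·1 ∈ Alt(A,σ)`
    (s : S →ₗ[F] S →ₗ[F] F)
    (hs : ∀ v w : S, ((v : A) * (w : A) + algebraMap F A (s v w))
      ∈ Set.range fun a : A => a - σ a)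
    -- `{v 1, …, v n}` is a set of alternating generators of `S` with `(v i)² = α i ∈ F^×`
    (v : Fin n → A) (α : Fin n → F)
    (hvalt : ∀ i, IsUnit (v i) ∧ v i ∈ Set.range fun a : A => a - σ a)
    (hvgen : Algebra.adjoin F (Set.range v) = S)
    (hvprod : ∀ T : Finset (Fin n), T.Nonempty →
      ((T.sort (· ≤ ·)).map v).prod ∈ Set.range fun a : A => a - σ a)
    (hvsq : ∀ i, v i ^ 2 = algebraMap F A (α i)) (hα : ∀ i, α i ≠ 0) :
    -- `𝔰` is isometric to the Pfister form `⟨⟨α 1, …, α n⟩⟩`, the diagonal form whose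
    -- entries are the products `∏ i ∈ T, α i` over subsets `T`; in particular it
    -- is nondegenerate
    (∃ e : (Finset (Fin n) → F) ≃ₗ[F] S,
      ∀ x y : Finset (Fin n) → F,
        s (e x) (e y) = ∑ T : Finset (Fin n), (∏ i ∈ T, α i) * x T * y T) ∧
    (∀ z : S, (∀ w : S, s z w = 0) → z = 0) := by

  classical
  -- the set of alternating elements: closure properties
  set Alt : Set A := Set.range fun a : A => a - σ a with hAlt
  have hAltSub : ∀ x y, x ∈ Alt → y ∈ Alt → x - y ∈ Alt := by
    rintro _ _ ⟨a, rfl⟩ ⟨b, rfl⟩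
    exact ⟨a - b, by simp only [map_sub]; abel⟩
  have hAltSmul : ∀ (c : F) x, x ∈ Alt → c • x ∈ Alt := by
    rintro c _ ⟨a, rfl⟩
    exact ⟨c • a, by simp [smul_sub]⟩
  have hMapZero : ∀ c : F, algebraMap F A c ∈ Alt → c = 0 := by
    intro c hc
    by_contra h
    apply horth
    have := hAltSmul c⁻¹ _ hc
    rwa [Algebra.smul_def, ← map_mul, inv_mul_cancel₀ h, map_one] at this
  -- S is commutative
  have hScomm : ∀ x y : A, x ∈ S → y ∈ S → x * y = y * x := by
    intro x y hx hy
    calc x * y = σ (x * y) := (hSsym _ (mul_mem hx hy)).symm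
    _ = σ y * σ x := hmul x y
    _ = y * x := by rw [hSsym x hx, hSsym y hy]
  letI : CommRing S := { (inferInstance : Ring S) with
    mul_comm := fun a b => Subtype.ext (hScomm a b a.2 b.2) }
  -- the generators as elements of S
  have hvS : ∀ i, v i ∈ S := fun i => hvgen ▸ Algebra.subset_adjoin ⟨i, rfl⟩
  set v' : Fin n → S := fun i => ⟨v i, hvS i⟩ with hv'
  have hv'sq : ∀ i, v' i * v' i = algebraMap F S (α i) := by
    intro i
    apply Subtype.ext
    show v i * v i = _
    rw [← sq, hvsq i]; rfl
  -- the squarefree monomials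
  set V : Finset (Fin n) → S := fun T => ∏ i ∈ T, v' i with hV
  have φdef : ∃ φ : S →* A, ∀ x : S, φ x = (x : A) := ⟨⟨⟨Subtype.val, rfl⟩, fun _ _ => rfl⟩, fun _ => rfl⟩
  obtain ⟨φ, hφ⟩ := φdef
  have hcoeV : ∀ T : Finset (Fin n), ((V T : S) : A) = ((T.sort (· ≤ ·)).map v).prod := by
    intro T
    rw [← hφ, hV, my_prod_sort]
    congr 1
    exact List.map_congr_left fun i _ => hφ _
  -- the multiplication rule
  have hmulV : ∀ T U : Finset (Fin n),
      V T * V U = algebraMap F S (∏ i ∈ T ∩ U, α i) * V ((T \ U) ∪ (U \ T)) := by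
    intro T U
    have hT : T = (T ∩ U) ∪ (T \ U) := by
      rw [Finset.union_comm]; exact (Finset.sdiff_union_inter T U).symm
    have hU : U = (T ∩ U) ∪ (U \ T) := by
      rw [Finset.union_comm, Finset.inter_comm]; exact (Finset.sdiff_union_inter U T).symm
    calc V T * V U = (∏ i ∈ (T ∩ U) ∪ (T \ U), v' i) * ∏ i ∈ (T ∩ U) ∪ (U \ T), v' i := by
          rw [hV]; rw [← hT, ← hU]
      _ = ((∏ i ∈ T ∩ U, v' i) * ∏ i ∈ T \ U, v' i) *
          ((∏ i ∈ T ∩ U, v' i) * ∏ i ∈ U \ T, v' i) := by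
          rw [Finset.prod_union (Finset.disjoint_sdiff_inter T U).symm,
            Finset.prod_union (Finset.inter_comm T U ▸ (Finset.disjoint_sdiff_inter U T).symm)]
      _ = ((∏ i ∈ T ∩ U, v' i) * ∏ i ∈ T ∩ U, v' i) *
          ((∏ i ∈ T \ U, v' i) * ∏ i ∈ U \ T, v' i) := by ring
      _ = (∏ i ∈ T ∩ U, v' i * v' i) * ∏ i ∈ (T \ U) ∪ (U \ T), v' i := by
          rw [Finset.prod_mul_distrib, Finset.prod_union (Finset.sdiff_disjoint.mono_right Finset.sdiff_subset)]
      _ = algebraMap F S (∏ i ∈ T ∩ U, α i) * V ((T \ U) ∪ (U \ T)) := by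
          rw [hV]
          congr 1
          rw [map_prod]
          exact Finset.prod_congr rfl fun i _ => hv'sq i
  -- the Gram matrix of s on the monomials is diagonal
  have hgram : ∀ T U : Finset (Fin n),
      s (V T) (V U) = if T = U then ∏ i ∈ T, α i else 0 := by
    intro T U
    have h1 := hs (V T) (V U)
    have h2 : ((V T : S) : A) * ((V U : S) : A)
        = algebraMap F A (∏ i ∈ T ∩ U, α i) * ((V ((T \ U) ∪ (U \ T)) : S) : A) := by
      have h := congrArg (fun z : S => (z : A)) (hmulV T U)
      simp only [MulMemClass.coe_mul] at h
      rw [h]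
      rfl
    by_cases hTU : T = U
    · subst hTU
      rw [if_pos rfl]
      have hW : (T \ T) ∪ (T \ T) = ∅ := by simp
      rw [hW] at h2
      have hVempty : ((V (∅ : Finset (Fin n)) : S) : A) = 1 := by
        rw [hV]; simp
      rw [hVempty, mul_one, Finset.inter_self] at h2
      rw [h2, ← map_add] at h1
      have h4 := hMapZero _ h1
      have htwo : (2 : F) = 0 := CharTwo.two_eq_zero
      linear_combination h4 - (∏ i ∈ T, α i) * htwo
    · rw [if_neg hTU]
      set W := (T \ U) ∪ (U \ T) with hW
      have hWne : W.Nonempty := by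
        rw [Finset.nonempty_iff_ne_empty]
        intro h
        apply hTU
        have h1 : T \ U = ∅ := Finset.union_eq_empty.mp h |>.1
        have h2 : U \ T = ∅ := Finset.union_eq_empty.mp h |>.2
        exact Finset.Subset.antisymm (Finset.sdiff_eq_empty_iff_subset.mp h1)
          (Finset.sdiff_eq_empty_iff_subset.mp h2)
      have hWalt : ((V W : S) : A) ∈ Alt := by
        rw [hcoeV]
        exact hvprod W hWne
      have hprodAlt : ((V T : S) : A) * ((V U : S) : A) ∈ Alt := by
        rw [h2, ← Algebra.smul_def]
        exact hAltSmul _ _ hWalt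
      have : algebraMap F A (s (V T) (V U)) ∈ Alt := by
        have := hAltSub _ _ h1 hprodAlt
        simpa using this
      exact hMapZero _ this
  -- linear independence of the monomials
  have hli : LinearIndependent F V := by
    rw [Fintype.linearIndependent_iff]
    intro c hc U
    have h0 : s (∑ T : Finset (Fin n), c T • V T) (V U) = 0 := by rw [hc, map_zero]; rfl
    rw [map_sum, LinearMap.sum_apply] at h0
    simp only [map_smul, LinearMap.smul_apply, hgram, smul_eq_mul, mul_ite, mul_zero] at h0
    rw [Finset.sum_ite_eq' Finset.univ U (fun T => c T * ∏ i ∈ T, α i)] at h0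
    simp only [Finset.mem_univ, if_true] at h0
    rcases mul_eq_zero.mp h0 with h | h
    · exact h
    · exact absurd h (Finset.prod_ne_zero_iff.mpr fun i _ => hα i)
  -- the monomials span S
  have hadj : Algebra.adjoin F (Set.range v') = (⊤ : Subalgebra F S) := by
    apply Subalgebra.map_injective (f := S.val) Subtype.val_injective
    rw [AlgHom.map_adjoin]
    have : S.val '' Set.range v' = Set.range v := by
      ext x
      simp only [Set.mem_image, Set.mem_range]
      constructor
      · rintro ⟨_, ⟨i, rfl⟩, rfl⟩; exact ⟨i, rfl⟩
      · rintro ⟨i, rfl⟩; exact ⟨v' i, ⟨i, rfl⟩, rfl⟩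
    rw [this, hvgen]
    rw [Algebra.map_top, Subalgebra.range_val]
  set P : Submodule F S := Submodule.span F (Set.range V) with hP
  have hPone : (1 : S) ∈ P := by
    have : V ∅ = 1 := by rw [hV]; simp
    exact this ▸ Submodule.subset_span ⟨∅, rfl⟩
  have hPmul : ∀ x y : S, x ∈ P → y ∈ P → x * y ∈ P := by
    intro x y hx hy
    have h := Submodule.mul_mem_mul hx hy
    rw [hP, Submodule.span_mul_span] at h
    refine Submodule.span_le.mpr ?_ h
    rintro z ⟨a, ⟨T, rfl⟩, b, ⟨U, rfl⟩, rfl⟩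
    simp only [SetLike.mem_coe]
    show V T * V U ∈ P
    rw [hmulV T U, ← Algebra.smul_def]
    exact Submodule.smul_mem _ _ (Submodule.subset_span ⟨_, rfl⟩)
  have hspan : ⊤ ≤ Submodule.span F (Set.range V) := by
    intro x _
    have hx : x ∈ P.toSubalgebra hPone hPmul := by
      have hxt : x ∈ Algebra.adjoin F (Set.range v') := hadj.symm ▸ Algebra.mem_top
      refine Algebra.adjoin_le ?_ hxt
      rintro _ ⟨i, rfl⟩
      show v' i ∈ P
      have : V {i} = v' i := by rw [hV]; simp
      exact this ▸ Submodule.subset_span ⟨{i}, rfl⟩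
    exact hx
  set b : Module.Basis (Finset (Fin n)) F S := Module.Basis.mk hli hspan with hb
  have hbV : ∀ T, b T = V T := fun T => by rw [hb, Module.Basis.mk_apply]
  refine ⟨⟨b.equivFun.symm, ?_⟩, ?_⟩
  · intro x y
    rw [Module.Basis.equivFun_symm_apply, Module.Basis.equivFun_symm_apply, map_sum]
    refine Finset.sum_congr rfl fun U _ => ?_
    rw [map_smul, map_sum, LinearMap.sum_apply]
    simp only [map_smul, LinearMap.smul_apply, hbV, hgram, smul_eq_mul, mul_ite, mul_zero]
    rw [Finset.sum_ite_eq' Finset.univ U (fun T => x T * ∏ i ∈ T, α i)]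
    simp only [Finset.mem_univ, if_true]
    ring
  · intro z hz
    have : ∀ U, b.equivFun z U = 0 := by
      intro U
      have h0 := hz (V U)
      have hzz : z = ∑ T : Finset (Fin n), b.equivFun z T • V T := by
        conv_lhs => rw [← b.equivFun.symm_apply_apply z]
        rw [Module.Basis.equivFun_symm_apply]
        exact Finset.sum_congr rfl fun T _ => by rw [hbV]
      rw [hzz, map_sum, LinearMap.sum_apply] at h0
      simp only [map_smul, LinearMap.smul_apply, hgram, smul_eq_mul, mul_ite, mul_zero] at h0
      rw [Finset.sum_ite_eq' Finset.univ U (fun T => b.equivFun z T * ∏ i ∈ T, α i)] at h0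
      simp only [Finset.mem_univ, if_true] at h0
      rcases mul_eq_zero.mp h0 with h | h
      · exact h
      · exact absurd h (Finset.prod_ne_zero_iff.mpr fun i _ => hα i)
    have : b.equivFun z = 0 := funext this
    have := congrArg b.equivFun.symm this
    rwa [b.equivFun.symm_apply_apply, map_zero] at this
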